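/- Let n ≥ 7 with n ≡ 1 or 5 (mod 6) be prime. For each 1 ≤ i ≤ (n-1)/2, the edge set A_i ∪ B_i ∪ C_{i-1} (a set of 3n edges of the complete graph on {0,...,2n-1}) can be partitioned into three perfect matchings of K_{2n}, where A_i = { {x,y} ⊂ {0,...,n-1} : y-x ≡ ±i (mod n) }, B_i = { {x,y} ⊂ {n,...,2n-1} : y-x ≡ ±i (mod n) }, and C_{i-1} = { {x,y} : 0 ≤ x ≤ n-1, n ≤ y ≤ 2n-1, x+y ≡ i-1 (mod n) }. -/
import Mathlib


/-- `A_i = { {x,y} ⊆ {0,…,n-1} : y - x ≡ ±i (mod n) }`. -/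
def AA (n i : ℕ) : Set (Finset ℕ) :=
  { p | ∃ x y : ℕ, x < n ∧ y < n ∧ x ≠ y ∧
      ((y + n - x) % n = i ∨ (x + n - y) % n = i) ∧ p = {x, y} }

/-- `B_i = { {x,y} ⊆ {n,…,2n-1} : y - x ≡ ±i (mod n) }`. -/
def BB (n i : ℕ) : Set (Finset ℕ) :=
  { p | ∃ x y : ℕ, n ≤ x ∧ x < 2 * n ∧ n ≤ y ∧ y < 2 * n ∧ x ≠ y ∧
      ((y + n - x) % n = i ∨ (x + n - y) % n = i) ∧ p = {x, y} }

/-- `C_i = { {x,y} : 0 ≤ x ≤ n-1, n ≤ y ≤ 2n-1, x + y ≡ i (mod n) }`. -/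
def CC (n i : ℕ) : Set (Finset ℕ) :=
  { p | ∃ x y : ℕ, x < n ∧ n ≤ y ∧ y < 2 * n ∧ (x + y) % n = i ∧ p = {x, y} }

/-- A perfect matching (one-factor) of the complete graph on `{0,…,2n-1}`. -/
def IsOneFactor (n : ℕ) (F : Set (Finset ℕ)) : Prop :=
  (∀ p ∈ F, p.card = 2 ∧ ∀ x ∈ p, x < 2 * n) ∧
  (F.Pairwise fun p q => Disjoint p q) ∧
  (∀ v < 2 * n, ∃ p ∈ F, v ∈ p)

namespace ABCaux

def f (n i k : ℕ) : ℕ := (k * i) % n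
def g (n i k : ℕ) : ℕ := n + ((i - 1 + k * (n - i)) % n)

def F1 (n i : ℕ) : Set (Finset ℕ) :=
  ({p | ∃ j < (n - 1) / 2, p = {f n i (2 * j + 1), f n i (2 * j + 2)}} ∪
    {p | ∃ j < (n - 1) / 2, p = {g n i (2 * j + 1), g n i (2 * j + 2)}}) ∪
    {({f n i 0, g n i 0} : Finset ℕ)}

def F2 (n i : ℕ) : Set (Finset ℕ) :=
  ({p | ∃ j < (n - 1) / 2, p = {f n i (2 * j + 2), f n i (2 * j + 3)}} ∪
    {p | ∃ j < (n - 1) / 2, p = {g n i (2 * j + 2), g n i (2 * j + 3)}}) ∪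
    {({f n i 1, g n i 1} : Finset ℕ)}

def F3 (n i : ℕ) : Set (Finset ℕ) :=
  ({({f n i 0, f n i 1} : Finset ℕ)} ∪ {({g n i 0, g n i 1} : Finset ℕ)}) ∪
    {p | ∃ k, 2 ≤ k ∧ k < n ∧ p = {f n i k, g n i k}}

lemma disj_pair {a b c d : ℕ} (h1 : a ≠ c) (h2 : a ≠ d) (h3 : b ≠ c) (h4 : b ≠ d) :
    Disjoint ({a, b} : Finset ℕ) ({c, d} : Finset ℕ) := by
  rw [Finset.disjoint_left]
  rintro x hx hy
  simp only [Finset.mem_insert, Finset.mem_singleton] at hx hy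
  rcases hx with rfl | rfl <;> rcases hy with rfl | rfl <;> simp_all

lemma pair_eq_elim {a b c d : ℕ} (h : ({a, b} : Finset ℕ) = {c, d}) :
    (a = c ∨ a = d) ∧ (b = c ∨ b = d) ∧ (c = a ∨ c = b) ∧ (d = a ∨ d = b) := by
  have ha : a ∈ ({c, d} : Finset ℕ) := by rw [← h]; simp
  have hb : b ∈ ({c, d} : Finset ℕ) := by rw [← h]; simp
  have hc : c ∈ ({a, b} : Finset ℕ) := by rw [h]; simp
  have hd : d ∈ ({a, b} : Finset ℕ) := by rw [h]; simp
  simp only [Finset.mem_insert, Finset.mem_singleton] at ha hb hc hd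
  exact ⟨ha, hb, hc, hd⟩

variable {n i : ℕ}

lemma f_top : f n i n = f n i 0 := by simp [f]

lemma g_top : g n i n = g n i 0 := by
  unfold g
  congr 1
  have e : i - 1 + n * (n - i) = i - 1 + (n - i) * n := by ring
  rw [e, Nat.add_mul_mod_self_right]
  simp

lemma castf (k : ℕ) : ((f n i k : ℕ) : ZMod n) = (k : ZMod n) * i := by
  simp [f, ZMod.natCast_mod]

lemma castg (h1 : 1 ≤ i) (h2 : i ≤ n) (k : ℕ) :
    ((g n i k : ℕ) : ZMod n) = (i : ZMod n) - 1 - (k : ZMod n) * i := by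
  have : ((n : ℕ) : ZMod n) = 0 := ZMod.natCast_self n
  simp only [g, Nat.cast_add, this, zero_add, ZMod.natCast_mod]
  push_cast [Nat.cast_sub h1, Nat.cast_sub h2, ZMod.natCast_self]
  ring

lemma cast_inj (hn : 0 < n) {a b : ℕ} (ha : a < n) (hb : b < n)
    (h : (a : ZMod n) = (b : ZMod n)) : a = b := by
  haveI : NeZero n := ⟨hn.ne'⟩
  have := congrArg ZMod.val h
  rwa [ZMod.val_cast_of_lt ha, ZMod.val_cast_of_lt hb] at this

lemma mod_eq_of_cast (hn : 0 < n) {m r : ℕ} (h : (m : ZMod n) = (r : ZMod n)) (hr : r < n) :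
    m % n = r := by
  have : ((m % n : ℕ) : ZMod n) = (r : ZMod n) := by rwa [ZMod.natCast_mod]
  exact cast_inj hn (Nat.mod_lt _ hn) hr this

section prime
variable (hp : n.Prime) (h1 : 1 ≤ i) (h2 : 2 * i < n)

include hp h1 h2

lemma i_ne_zero : (i : ZMod n) ≠ 0 := by
  haveI : NeZero n := ⟨hp.pos.ne'⟩
  rw [Ne, ZMod.natCast_eq_zero_iff]
  intro hdvd
  have := Nat.le_of_dvd (by omega) hdvd
  omega

lemma f_lt (k : ℕ) : f n i k < n := Nat.mod_lt _ hp.pos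

lemma f_lt2 (k : ℕ) : f n i k < 2 * n := by
  have := f_lt hp h1 h2 (i := i) k; omega

lemma g_ge (k : ℕ) : n ≤ g n i k := Nat.le_add_right _ _

lemma g_lt (k : ℕ) : g n i k < 2 * n := by
  have := Nat.mod_lt (i - 1 + k * (n - i)) hp.pos
  unfold g; omega

lemma f_inj_mod {a b : ℕ} (h : f n i a = f n i b) : a % n = b % n := by
  haveI := Fact.mk hp
  have hc : ((f n i a : ℕ) : ZMod n) = ((f n i b : ℕ) : ZMod n) := by rw [h]
  rw [castf, castf] at hc
  have : (a : ZMod n) = b := mul_right_cancel₀ (i_ne_zero hp h1 h2) hc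
  exact mod_eq_of_cast hp.pos (by rw [ZMod.natCast_mod, this]) (Nat.mod_lt _ hp.pos)

lemma g_inj_mod {a b : ℕ} (h : g n i a = g n i b) : a % n = b % n := by
  haveI := Fact.mk hp
  have hc : ((g n i a : ℕ) : ZMod n) = ((g n i b : ℕ) : ZMod n) := by rw [h]
  rw [castg h1 (by omega), castg h1 (by omega)] at hc
  have : (a : ZMod n) = b := mul_right_cancel₀ (i_ne_zero hp h1 h2) (by linear_combination -hc)
  exact mod_eq_of_cast hp.pos (by rw [ZMod.natCast_mod, this]) (Nat.mod_lt _ hp.pos)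

lemma f_surj {v : ℕ} (hv : v < n) : ∃ k < n, f n i k = v := by
  haveI := Fact.mk hp
  refine ⟨((v : ZMod n) * (i : ZMod n)⁻¹).val, ZMod.val_lt _, ?_⟩
  apply mod_eq_of_cast hp.pos ?_ hv
  push_cast [ZMod.natCast_val, ZMod.cast_id]
  rw [mul_assoc, inv_mul_cancel₀ (i_ne_zero hp h1 h2), mul_one]

lemma g_surj {v : ℕ} (hv1 : n ≤ v) (hv2 : v < 2 * n) : ∃ k < n, g n i k = v := by
  haveI := Fact.mk hp
  refine ⟨((((i : ZMod n) - 1) - ((v - n : ℕ) : ZMod n)) * (i : ZMod n)⁻¹).val, ZMod.val_lt _, ?_⟩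
  have hmod : (i - 1 + (((((i : ZMod n) - 1) - ((v - n : ℕ) : ZMod n)) * (i : ZMod n)⁻¹).val) * (n - i)) % n = v - n := by
    apply mod_eq_of_cast hp.pos ?_ (by omega)
    push_cast [Nat.cast_sub h1, Nat.cast_sub (le_of_lt (by omega : i < n)), ZMod.natCast_self,
      ZMod.natCast_val, ZMod.cast_id]
    have hne := i_ne_zero hp h1 h2
    field_simp
    ring
  unfold g
  omega

lemma f_eq_idx {a b : ℕ} (ha : a ≤ n) (hb : b ≤ n) (h : f n i a = f n i b) :
    a = b ∨ (a = n ∧ b = 0) ∨ (a = 0 ∧ b = n) := by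
  have hm := f_inj_mod hp h1 h2 h
  have ha' : a % n = if a = n then 0 else a := by
    split
    · simp [*]
    · exact Nat.mod_eq_of_lt (by omega)
  have hb' : b % n = if b = n then 0 else b := by
    split
    · simp [*]
    · exact Nat.mod_eq_of_lt (by omega)
  rw [ha', hb'] at hm
  split_ifs at hm <;> omega

lemma g_eq_idx {a b : ℕ} (ha : a ≤ n) (hb : b ≤ n) (h : g n i a = g n i b) :
    a = b ∨ (a = n ∧ b = 0) ∨ (a = 0 ∧ b = n) := by
  have hm := g_inj_mod hp h1 h2 h
  have ha' : a % n = if a = n then 0 else a := by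
    split
    · simp [*]
    · exact Nat.mod_eq_of_lt (by omega)
  have hb' : b % n = if b = n then 0 else b := by
    split
    · simp [*]
    · exact Nat.mod_eq_of_lt (by omega)
  rw [ha', hb'] at hm
  split_ifs at hm <;> omega

lemma f_ne {a b : ℕ} (ha : a ≤ n) (hb : b ≤ n)
    (hc : ¬(a = b ∨ (a = n ∧ b = 0) ∨ (a = 0 ∧ b = n))) : f n i a ≠ f n i b :=
  fun h => hc (f_eq_idx hp h1 h2 ha hb h)

lemma g_ne {a b : ℕ} (ha : a ≤ n) (hb : b ≤ n)
    (hc : ¬(a = b ∨ (a = n ∧ b = 0) ∨ (a = 0 ∧ b = n))) : g n i a ≠ g n i b :=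
  fun h => hc (g_eq_idx hp h1 h2 ha hb h)

lemma fg_ne (a b : ℕ) : f n i a ≠ g n i b := by
  have := f_lt hp h1 h2 (i := i) a
  have := g_ge (i := i) hp h1 h2 b
  omega

lemma gf_ne (a b : ℕ) : g n i a ≠ f n i b := (fg_ne hp h1 h2 b a).symm

lemma f_step_ne (k : ℕ) : f n i k ≠ f n i (k + 1) := by
  intro h
  have := f_inj_mod hp h1 h2 h
  have hd : n ∣ (k + 1) - k := (Nat.modEq_iff_dvd' (by omega)).mp this
  simp at hd; omega

lemma g_step_ne (k : ℕ) : g n i k ≠ g n i (k + 1) := by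
  intro h
  have := g_inj_mod hp h1 h2 h
  have hd : n ∣ (k + 1) - k := (Nat.modEq_iff_dvd' (by omega)).mp this
  simp at hd; omega

lemma memAA (k : ℕ) : ({f n i k, f n i (k + 1)} : Finset ℕ) ∈ AA n i := by
  refine ⟨f n i k, f n i (k+1), f_lt hp h1 h2 k, f_lt hp h1 h2 _, f_step_ne hp h1 h2 k,
    Or.inl ?_, rfl⟩
  apply mod_eq_of_cast hp.pos ?_ (by omega)
  have hle : f n i k ≤ f n i (k+1) + n := by have := f_lt hp h1 h2 (i := i) k; omega
  push_cast [Nat.cast_sub hle, castf, ZMod.natCast_self]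
  ring

lemma memBB (k : ℕ) : ({g n i k, g n i (k + 1)} : Finset ℕ) ∈ BB n i := by
  refine ⟨g n i k, g n i (k+1), g_ge hp h1 h2 k, g_lt hp h1 h2 k, g_ge hp h1 h2 _,
    g_lt hp h1 h2 _, g_step_ne hp h1 h2 k, Or.inr ?_, rfl⟩
  apply mod_eq_of_cast hp.pos ?_ (by omega)
  have hle : g n i (k+1) ≤ g n i k + n := by
    have := g_lt hp h1 h2 (i := i) k; have := g_ge (i := i) hp h1 h2 (k+1)
    have := g_ge (i := i) hp h1 h2 k; have := g_lt hp h1 h2 (i := i) (k+1); omega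
  push_cast [Nat.cast_sub hle, castg h1 (by omega : i ≤ n), ZMod.natCast_self]
  ring

lemma memCC (k : ℕ) : ({f n i k, g n i k} : Finset ℕ) ∈ CC n (i - 1) := by
  refine ⟨f n i k, g n i k, f_lt hp h1 h2 k, g_ge hp h1 h2 k, g_lt hp h1 h2 k, ?_, rfl⟩
  apply mod_eq_of_cast hp.pos ?_ (by omega)
  push_cast [castf, castg h1 (by omega : i ≤ n), Nat.cast_sub h1]
  ring

lemma AA_eq : AA n i = {p | ∃ k < n, p = {f n i k, f n i (k + 1)}} := by
  apply Set.eq_of_subset_of_subset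
  · rintro p ⟨x, y, hx, hy, hxy, hcond | hcond, rfl⟩
    · obtain ⟨k, hk, hfk⟩ := f_surj hp h1 h2 hx
      refine ⟨k, hk, ?_⟩
      have hyy : y = f n i (k + 1) := by
        apply cast_inj hp.pos hy (f_lt hp h1 h2 _)
        have hc := congrArg (Nat.cast : ℕ → ZMod n) hcond
        rw [ZMod.natCast_mod, Nat.cast_sub (by omega : x ≤ y + n)] at hc
        have hfc : (x : ZMod n) = (k : ZMod n) * i := by rw [← hfk, castf]
        rw [castf]
        push_cast [ZMod.natCast_self] at hc ⊢
        linear_combination hc + hfc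
      rw [hfk, hyy]
    · obtain ⟨k, hk, hfk⟩ := f_surj hp h1 h2 hy
      refine ⟨k, hk, ?_⟩
      have hxx : x = f n i (k + 1) := by
        apply cast_inj hp.pos hx (f_lt hp h1 h2 _)
        have hc := congrArg (Nat.cast : ℕ → ZMod n) hcond
        rw [ZMod.natCast_mod, Nat.cast_sub (by omega : y ≤ x + n)] at hc
        have hfc : (y : ZMod n) = (k : ZMod n) * i := by rw [← hfk, castf]
        rw [castf]
        push_cast [ZMod.natCast_self] at hc ⊢
        linear_combination hc + hfc
      rw [hfk, hxx, Finset.pair_comm]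
  · rintro p ⟨k, _, rfl⟩
    exact memAA hp h1 h2 k

lemma BB_eq : BB n i = {p | ∃ k < n, p = {g n i k, g n i (k + 1)}} := by
  apply Set.eq_of_subset_of_subset
  · rintro p ⟨x, y, hx1, hx2, hy1, hy2, hxy, hcond | hcond, rfl⟩
    · obtain ⟨k, hk, hgk⟩ := g_surj hp h1 h2 hy1 hy2
      refine ⟨k, hk, ?_⟩
      have b1 := g_ge (i := i) hp h1 h2 (k+1)
      have b2 := g_lt hp h1 h2 (i := i) (k+1)
      have hxx : x = g n i (k + 1) := by
        have key : x - n = g n i (k+1) - n := by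
          apply cast_inj hp.pos (by omega) (by omega)
          rw [Nat.cast_sub hx1, Nat.cast_sub b1]
          have hc := congrArg (Nat.cast : ℕ → ZMod n) hcond
          rw [ZMod.natCast_mod, Nat.cast_sub (by omega : x ≤ y + n)] at hc
          have hgc : (y : ZMod n) = (i : ZMod n) - 1 - (k : ZMod n) * i := by
            rw [← hgk, castg h1 (by omega)]
          have hg1 : ((g n i (k+1) : ℕ) : ZMod n) = (i : ZMod n) - 1 - ((k : ZMod n) + 1) * i := by
            rw [castg h1 (by omega)]; push_cast; ring
          rw [hg1]
          push_cast [ZMod.natCast_self] at hc ⊢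
          linear_combination hgc - hc
        omega
      rw [hgk, hxx, Finset.pair_comm]
    · obtain ⟨k, hk, hgk⟩ := g_surj hp h1 h2 hx1 hx2
      refine ⟨k, hk, ?_⟩
      have b1 := g_ge (i := i) hp h1 h2 (k+1)
      have b2 := g_lt hp h1 h2 (i := i) (k+1)
      have hyy : y = g n i (k + 1) := by
        have key : y - n = g n i (k+1) - n := by
          apply cast_inj hp.pos (by omega) (by omega)
          rw [Nat.cast_sub hy1, Nat.cast_sub b1]
          have hc := congrArg (Nat.cast : ℕ → ZMod n) hcond
          rw [ZMod.natCast_mod, Nat.cast_sub (by omega : y ≤ x + n)] at hc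
          have hgc : (x : ZMod n) = (i : ZMod n) - 1 - (k : ZMod n) * i := by
            rw [← hgk, castg h1 (by omega)]
          have hg1 : ((g n i (k+1) : ℕ) : ZMod n) = (i : ZMod n) - 1 - ((k : ZMod n) + 1) * i := by
            rw [castg h1 (by omega)]; push_cast; ring
          rw [hg1]
          push_cast [ZMod.natCast_self] at hc ⊢
          linear_combination hgc - hc
        omega
      rw [hgk, hyy]
  · rintro p ⟨k, _, rfl⟩
    exact memBB hp h1 h2 k

lemma CC_eq : CC n (i - 1) = {p | ∃ k < n, p = {f n i k, g n i k}} := by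
  apply Set.eq_of_subset_of_subset
  · rintro p ⟨x, y, hx, hy1, hy2, hcond, rfl⟩
    obtain ⟨k, hk, hfk⟩ := f_surj hp h1 h2 hx
    refine ⟨k, hk, ?_⟩
    have b1 := g_ge (i := i) hp h1 h2 k
    have b2 := g_lt hp h1 h2 (i := i) k
    have hyy : y = g n i k := by
      have key : y - n = g n i k - n := by
        apply cast_inj hp.pos (by omega) (by omega)
        rw [Nat.cast_sub hy1, Nat.cast_sub b1]
        have hc := congrArg (Nat.cast : ℕ → ZMod n) hcond
        rw [ZMod.natCast_mod] at hc
        have hgc : ((g n i k : ℕ) : ZMod n) = (i : ZMod n) - 1 - (k : ZMod n) * i :=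
          castg h1 (by omega) k
        have hfc : (x : ZMod n) = (k : ZMod n) * i := by rw [← hfk, castf]
        rw [hgc]
        push_cast [Nat.cast_sub h1, ZMod.natCast_self] at hc ⊢
        linear_combination hc - hfc
      omega
    rw [hfk, hyy]
  · rintro p ⟨k, _, rfl⟩
    exact memCC hp h1 h2 k

end prime

section main
variable (hp : n.Prime) (h1 : 1 ≤ i) (h2 : 2 * i < n) (h7 : 7 ≤ n) (hodd : n % 2 = 1)
include hp h1 h2 h7 hodd

lemma card_bound_F1 : ∀ p ∈ F1 n i, p.card = 2 ∧ ∀ x ∈ p, x < 2 * n := by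
  rintro p ((⟨j, hj, rfl⟩ | ⟨j, hj, rfl⟩) | rfl)
  · refine ⟨Finset.card_pair (f_ne hp h1 h2 (by omega) (by omega) (by omega)), ?_⟩
    intro x hx
    simp only [Finset.mem_insert, Finset.mem_singleton] at hx
    rcases hx with rfl | rfl <;> exact f_lt2 hp h1 h2 _
  · refine ⟨Finset.card_pair (g_ne hp h1 h2 (by omega) (by omega) (by omega)), ?_⟩
    intro x hx
    simp only [Finset.mem_insert, Finset.mem_singleton] at hx
    rcases hx with rfl | rfl <;> exact g_lt hp h1 h2 _
  · refine ⟨Finset.card_pair (fg_ne hp h1 h2 0 0), ?_⟩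
    intro x hx
    simp only [Finset.mem_insert, Finset.mem_singleton] at hx
    rcases hx with rfl | rfl
    · have := f_lt hp h1 h2 (i := i) 0; omega
    · exact g_lt hp h1 h2 0

lemma card_bound_F2 : ∀ p ∈ F2 n i, p.card = 2 ∧ ∀ x ∈ p, x < 2 * n := by
  rintro p ((⟨j, hj, rfl⟩ | ⟨j, hj, rfl⟩) | rfl)
  · refine ⟨Finset.card_pair (f_ne hp h1 h2 (by omega) (by omega) (by omega)), ?_⟩
    intro x hx
    simp only [Finset.mem_insert, Finset.mem_singleton] at hx
    rcases hx with rfl | rfl <;> exact f_lt2 hp h1 h2 _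
  · refine ⟨Finset.card_pair (g_ne hp h1 h2 (by omega) (by omega) (by omega)), ?_⟩
    intro x hx
    simp only [Finset.mem_insert, Finset.mem_singleton] at hx
    rcases hx with rfl | rfl <;> exact g_lt hp h1 h2 _
  · refine ⟨Finset.card_pair (fg_ne hp h1 h2 1 1), ?_⟩
    intro x hx
    simp only [Finset.mem_insert, Finset.mem_singleton] at hx
    rcases hx with rfl | rfl
    · have := f_lt hp h1 h2 (i := i) 1; omega
    · exact g_lt hp h1 h2 1

lemma card_bound_F3 : ∀ p ∈ F3 n i, p.card = 2 ∧ ∀ x ∈ p, x < 2 * n := by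
  rintro p ((rfl | rfl) | ⟨k, hk2, hkn, rfl⟩)
  · refine ⟨Finset.card_pair (f_ne hp h1 h2 (by omega) (by omega) (by omega)), ?_⟩
    intro x hx
    simp only [Finset.mem_insert, Finset.mem_singleton] at hx
    rcases hx with rfl | rfl <;> exact f_lt2 hp h1 h2 _
  · refine ⟨Finset.card_pair (g_ne hp h1 h2 (by omega) (by omega) (by omega)), ?_⟩
    intro x hx
    simp only [Finset.mem_insert, Finset.mem_singleton] at hx
    rcases hx with rfl | rfl <;> exact g_lt hp h1 h2 _
  · refine ⟨Finset.card_pair (fg_ne hp h1 h2 k k), ?_⟩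
    intro x hx
    simp only [Finset.mem_insert, Finset.mem_singleton] at hx
    rcases hx with rfl | rfl
    · have := f_lt hp h1 h2 (i := i) k; omega
    · exact g_lt hp h1 h2 k

lemma pairwise_F1 : (F1 n i).Pairwise fun p q => Disjoint p q := by
  rintro p ((⟨j, hj, rfl⟩ | ⟨j, hj, rfl⟩) | rfl) q ((⟨j', hj', rfl⟩ | ⟨j', hj', rfl⟩) | rfl) hne
  · rcases eq_or_ne j j' with rfl | hjj
    · exact absurd rfl hne
    · exact disj_pair (f_ne hp h1 h2 (by omega) (by omega) (by omega))
        (f_ne hp h1 h2 (by omega) (by omega) (by omega))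
        (f_ne hp h1 h2 (by omega) (by omega) (by omega))
        (f_ne hp h1 h2 (by omega) (by omega) (by omega))
  · exact disj_pair (fg_ne hp h1 h2 _ _) (fg_ne hp h1 h2 _ _) (fg_ne hp h1 h2 _ _)
      (fg_ne hp h1 h2 _ _)
  · exact disj_pair (f_ne hp h1 h2 (by omega) (by omega) (by omega)) (fg_ne hp h1 h2 _ _)
      (f_ne hp h1 h2 (by omega) (by omega) (by omega)) (fg_ne hp h1 h2 _ _)
  · exact disj_pair (gf_ne hp h1 h2 _ _) (gf_ne hp h1 h2 _ _) (gf_ne hp h1 h2 _ _)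
      (gf_ne hp h1 h2 _ _)
  · rcases eq_or_ne j j' with rfl | hjj
    · exact absurd rfl hne
    · exact disj_pair (g_ne hp h1 h2 (by omega) (by omega) (by omega))
        (g_ne hp h1 h2 (by omega) (by omega) (by omega))
        (g_ne hp h1 h2 (by omega) (by omega) (by omega))
        (g_ne hp h1 h2 (by omega) (by omega) (by omega))
  · exact disj_pair (gf_ne hp h1 h2 _ _) (g_ne hp h1 h2 (by omega) (by omega) (by omega))
      (gf_ne hp h1 h2 _ _) (g_ne hp h1 h2 (by omega) (by omega) (by omega))
  · exact disj_pair (f_ne hp h1 h2 (by omega) (by omega) (by omega))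
      (f_ne hp h1 h2 (by omega) (by omega) (by omega)) (gf_ne hp h1 h2 _ _) (gf_ne hp h1 h2 _ _)
  · exact disj_pair (fg_ne hp h1 h2 _ _) (fg_ne hp h1 h2 _ _)
      (g_ne hp h1 h2 (by omega) (by omega) (by omega))
      (g_ne hp h1 h2 (by omega) (by omega) (by omega))
  · exact absurd rfl hne

lemma pairwise_F2 : (F2 n i).Pairwise fun p q => Disjoint p q := by
  rintro p ((⟨j, hj, rfl⟩ | ⟨j, hj, rfl⟩) | rfl) q ((⟨j', hj', rfl⟩ | ⟨j', hj', rfl⟩) | rfl) hne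
  · rcases eq_or_ne j j' with rfl | hjj
    · exact absurd rfl hne
    · exact disj_pair (f_ne hp h1 h2 (by omega) (by omega) (by omega))
        (f_ne hp h1 h2 (by omega) (by omega) (by omega))
        (f_ne hp h1 h2 (by omega) (by omega) (by omega))
        (f_ne hp h1 h2 (by omega) (by omega) (by omega))
  · exact disj_pair (fg_ne hp h1 h2 _ _) (fg_ne hp h1 h2 _ _) (fg_ne hp h1 h2 _ _)
      (fg_ne hp h1 h2 _ _)
  · exact disj_pair (f_ne hp h1 h2 (by omega) (by omega) (by omega)) (fg_ne hp h1 h2 _ _)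
      (f_ne hp h1 h2 (by omega) (by omega) (by omega)) (fg_ne hp h1 h2 _ _)
  · exact disj_pair (gf_ne hp h1 h2 _ _) (gf_ne hp h1 h2 _ _) (gf_ne hp h1 h2 _ _)
      (gf_ne hp h1 h2 _ _)
  · rcases eq_or_ne j j' with rfl | hjj
    · exact absurd rfl hne
    · exact disj_pair (g_ne hp h1 h2 (by omega) (by omega) (by omega))
        (g_ne hp h1 h2 (by omega) (by omega) (by omega))
        (g_ne hp h1 h2 (by omega) (by omega) (by omega))
        (g_ne hp h1 h2 (by omega) (by omega) (by omega))
  · exact disj_pair (gf_ne hp h1 h2 _ _) (g_ne hp h1 h2 (by omega) (by omega) (by omega))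
      (gf_ne hp h1 h2 _ _) (g_ne hp h1 h2 (by omega) (by omega) (by omega))
  · exact disj_pair (f_ne hp h1 h2 (by omega) (by omega) (by omega))
      (f_ne hp h1 h2 (by omega) (by omega) (by omega)) (gf_ne hp h1 h2 _ _) (gf_ne hp h1 h2 _ _)
  · exact disj_pair (fg_ne hp h1 h2 _ _) (fg_ne hp h1 h2 _ _)
      (g_ne hp h1 h2 (by omega) (by omega) (by omega))
      (g_ne hp h1 h2 (by omega) (by omega) (by omega))
  · exact absurd rfl hne

lemma pairwise_F3 : (F3 n i).Pairwise fun p q => Disjoint p q := by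
  rintro p ((rfl | rfl) | ⟨k, hk2, hkn, rfl⟩) q ((rfl | rfl) | ⟨k', hk2', hkn', rfl⟩) hne
  · exact absurd rfl hne
  · exact disj_pair (fg_ne hp h1 h2 _ _) (fg_ne hp h1 h2 _ _) (fg_ne hp h1 h2 _ _)
      (fg_ne hp h1 h2 _ _)
  · exact disj_pair (f_ne hp h1 h2 (by omega) (by omega) (by omega)) (fg_ne hp h1 h2 _ _)
      (f_ne hp h1 h2 (by omega) (by omega) (by omega)) (fg_ne hp h1 h2 _ _)
  · exact disj_pair (gf_ne hp h1 h2 _ _) (gf_ne hp h1 h2 _ _) (gf_ne hp h1 h2 _ _)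
      (gf_ne hp h1 h2 _ _)
  · exact absurd rfl hne
  · exact disj_pair (gf_ne hp h1 h2 _ _) (g_ne hp h1 h2 (by omega) (by omega) (by omega))
      (gf_ne hp h1 h2 _ _) (g_ne hp h1 h2 (by omega) (by omega) (by omega))
  · exact disj_pair (f_ne hp h1 h2 (by omega) (by omega) (by omega))
      (f_ne hp h1 h2 (by omega) (by omega) (by omega)) (gf_ne hp h1 h2 _ _) (gf_ne hp h1 h2 _ _)
  · exact disj_pair (fg_ne hp h1 h2 _ _) (fg_ne hp h1 h2 _ _)
      (g_ne hp h1 h2 (by omega) (by omega) (by omega))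
      (g_ne hp h1 h2 (by omega) (by omega) (by omega))
  · rcases eq_or_ne k k' with rfl | hkk
    · exact absurd rfl hne
    · exact disj_pair (f_ne hp h1 h2 (by omega) (by omega) (by omega)) (fg_ne hp h1 h2 _ _)
        (gf_ne hp h1 h2 _ _) (g_ne hp h1 h2 (by omega) (by omega) (by omega))

lemma cover_F1 : ∀ v < 2 * n, ∃ p ∈ F1 n i, v ∈ p := by
  intro v hv
  rcases Nat.lt_or_ge v n with hv1 | hv1
  · obtain ⟨k, hk, rfl⟩ := f_surj hp h1 h2 hv1
    rcases Nat.eq_zero_or_pos k with rfl | hk0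
    · exact ⟨{f n i 0, g n i 0}, Or.inr rfl, by simp⟩
    · rcases Nat.even_or_odd k with he | ho
      · rw [Nat.even_iff] at he
        refine ⟨{f n i (2 * ((k - 2) / 2) + 1), f n i (2 * ((k - 2) / 2) + 2)},
          Or.inl (Or.inl ⟨(k - 2) / 2, by omega, rfl⟩), ?_⟩
        have e : 2 * ((k - 2) / 2) + 2 = k := by omega
        rw [e]; simp
      · rw [Nat.odd_iff] at ho
        refine ⟨{f n i (2 * ((k - 1) / 2) + 1), f n i (2 * ((k - 1) / 2) + 2)},
          Or.inl (Or.inl ⟨(k - 1) / 2, by omega, rfl⟩), ?_⟩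
        have e : 2 * ((k - 1) / 2) + 1 = k := by omega
        rw [e]; simp
  · obtain ⟨k, hk, rfl⟩ := g_surj hp h1 h2 hv1 hv
    rcases Nat.eq_zero_or_pos k with rfl | hk0
    · exact ⟨{f n i 0, g n i 0}, Or.inr rfl, by simp⟩
    · rcases Nat.even_or_odd k with he | ho
      · rw [Nat.even_iff] at he
        refine ⟨{g n i (2 * ((k - 2) / 2) + 1), g n i (2 * ((k - 2) / 2) + 2)},
          Or.inl (Or.inr ⟨(k - 2) / 2, by omega, rfl⟩), ?_⟩
        have e : 2 * ((k - 2) / 2) + 2 = k := by omega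
        rw [e]; simp
      · rw [Nat.odd_iff] at ho
        refine ⟨{g n i (2 * ((k - 1) / 2) + 1), g n i (2 * ((k - 1) / 2) + 2)},
          Or.inl (Or.inr ⟨(k - 1) / 2, by omega, rfl⟩), ?_⟩
        have e : 2 * ((k - 1) / 2) + 1 = k := by omega
        rw [e]; simp

lemma cover_F2 : ∀ v < 2 * n, ∃ p ∈ F2 n i, v ∈ p := by
  intro v hv
  rcases Nat.lt_or_ge v n with hv1 | hv1
  · obtain ⟨k, hk, rfl⟩ := f_surj hp h1 h2 hv1
    rcases Nat.eq_zero_or_pos k with rfl | hk0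
    · refine ⟨{f n i (2 * ((n - 3) / 2) + 2), f n i (2 * ((n - 3) / 2) + 3)},
        Or.inl (Or.inl ⟨(n - 3) / 2, by omega, rfl⟩), ?_⟩
      have e : 2 * ((n - 3) / 2) + 3 = n := by omega
      rw [e, f_top]; simp
    · rcases eq_or_ne k 1 with rfl | hk1
      · exact ⟨{f n i 1, g n i 1}, Or.inr rfl, by simp⟩
      · rcases Nat.even_or_odd k with he | ho
        · rw [Nat.even_iff] at he
          refine ⟨{f n i (2 * ((k - 2) / 2) + 2), f n i (2 * ((k - 2) / 2) + 3)},
            Or.inl (Or.inl ⟨(k - 2) / 2, by omega, rfl⟩), ?_⟩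
          have e : 2 * ((k - 2) / 2) + 2 = k := by omega
          rw [e]; simp
        · rw [Nat.odd_iff] at ho
          refine ⟨{f n i (2 * ((k - 3) / 2) + 2), f n i (2 * ((k - 3) / 2) + 3)},
            Or.inl (Or.inl ⟨(k - 3) / 2, by omega, rfl⟩), ?_⟩
          have e : 2 * ((k - 3) / 2) + 3 = k := by omega
          rw [e]; simp
  · obtain ⟨k, hk, rfl⟩ := g_surj hp h1 h2 hv1 hv
    rcases Nat.eq_zero_or_pos k with rfl | hk0
    · refine ⟨{g n i (2 * ((n - 3) / 2) + 2), g n i (2 * ((n - 3) / 2) + 3)},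
        Or.inl (Or.inr ⟨(n - 3) / 2, by omega, rfl⟩), ?_⟩
      have e : 2 * ((n - 3) / 2) + 3 = n := by omega
      rw [e, g_top]; simp
    · rcases eq_or_ne k 1 with rfl | hk1
      · exact ⟨{f n i 1, g n i 1}, Or.inr rfl, by simp⟩
      · rcases Nat.even_or_odd k with he | ho
        · rw [Nat.even_iff] at he
          refine ⟨{g n i (2 * ((k - 2) / 2) + 2), g n i (2 * ((k - 2) / 2) + 3)},
            Or.inl (Or.inr ⟨(k - 2) / 2, by omega, rfl⟩), ?_⟩
          have e : 2 * ((k - 2) / 2) + 2 = k := by omega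
          rw [e]; simp
        · rw [Nat.odd_iff] at ho
          refine ⟨{g n i (2 * ((k - 3) / 2) + 2), g n i (2 * ((k - 3) / 2) + 3)},
            Or.inl (Or.inr ⟨(k - 3) / 2, by omega, rfl⟩), ?_⟩
          have e : 2 * ((k - 3) / 2) + 3 = k := by omega
          rw [e]; simp

lemma cover_F3 : ∀ v < 2 * n, ∃ p ∈ F3 n i, v ∈ p := by
  intro v hv
  rcases Nat.lt_or_ge v n with hv1 | hv1
  · obtain ⟨k, hk, rfl⟩ := f_surj hp h1 h2 hv1
    rcases Nat.lt_or_ge k 2 with hk2 | hk2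
    · interval_cases k
      · exact ⟨{f n i 0, f n i 1}, Or.inl (Or.inl rfl), by simp⟩
      · exact ⟨{f n i 0, f n i 1}, Or.inl (Or.inl rfl), by simp⟩
    · exact ⟨{f n i k, g n i k}, Or.inr ⟨k, hk2, hk, rfl⟩, by simp⟩
  · obtain ⟨k, hk, rfl⟩ := g_surj hp h1 h2 hv1 hv
    rcases Nat.lt_or_ge k 2 with hk2 | hk2
    · interval_cases k
      · exact ⟨{g n i 0, g n i 1}, Or.inl (Or.inr rfl), by simp⟩
      · exact ⟨{g n i 0, g n i 1}, Or.inl (Or.inr rfl), by simp⟩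
    · exact ⟨{f n i k, g n i k}, Or.inr ⟨k, hk2, hk, rfl⟩, by simp⟩


lemma disj_F1_F2 : Disjoint (F1 n i) (F2 n i) := by
  rw [Set.disjoint_left]
  rintro p ((⟨j, hj, rfl⟩ | ⟨j, hj, rfl⟩) | rfl) ((⟨j', hj', hq⟩ | ⟨j', hj', hq⟩) | hq)
  · have E := pair_eq_elim hq
    have H1 := E.1.imp (fun e => f_eq_idx hp h1 h2 (by omega) (by omega) e)
      (fun e => f_eq_idx hp h1 h2 (by omega) (by omega) e)
    have H2 := E.2.1.imp (fun e => f_eq_idx hp h1 h2 (by omega) (by omega) e)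
      (fun e => f_eq_idx hp h1 h2 (by omega) (by omega) e)
    omega
  · have E := pair_eq_elim hq
    rcases E.1 with e | e <;> exact fg_ne hp h1 h2 _ _ e
  · have E := pair_eq_elim hq
    rcases E.2.2.2 with e | e <;> exact gf_ne hp h1 h2 _ _ e
  · have E := pair_eq_elim hq
    rcases E.1 with e | e <;> exact gf_ne hp h1 h2 _ _ e
  · have E := pair_eq_elim hq
    have H1 := E.1.imp (fun e => g_eq_idx hp h1 h2 (by omega) (by omega) e)
      (fun e => g_eq_idx hp h1 h2 (by omega) (by omega) e)
    have H2 := E.2.1.imp (fun e => g_eq_idx hp h1 h2 (by omega) (by omega) e)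
      (fun e => g_eq_idx hp h1 h2 (by omega) (by omega) e)
    omega
  · have E := pair_eq_elim hq
    rcases E.2.2.1 with e | e <;> exact fg_ne hp h1 h2 _ _ e
  · have E := pair_eq_elim hq
    rcases E.2.1 with e | e <;> exact gf_ne hp h1 h2 _ _ e
  · have E := pair_eq_elim hq
    rcases E.1 with e | e <;> exact fg_ne hp h1 h2 _ _ e
  · have E := pair_eq_elim hq
    rcases E.1 with e | e
    · have := f_eq_idx hp h1 h2 (by omega) (by omega) e; omega
    · exact fg_ne hp h1 h2 _ _ e

lemma disj_F1_F3 : Disjoint (F1 n i) (F3 n i) := by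
  rw [Set.disjoint_left]
  rintro p ((⟨j, hj, rfl⟩ | ⟨j, hj, rfl⟩) | rfl) ((hq | hq) | ⟨k, hk2, hkn, hq⟩)
  · have E := pair_eq_elim hq
    have H1 := E.1.imp (fun e => f_eq_idx hp h1 h2 (by omega) (by omega) e)
      (fun e => f_eq_idx hp h1 h2 (by omega) (by omega) e)
    have H2 := E.2.1.imp (fun e => f_eq_idx hp h1 h2 (by omega) (by omega) e)
      (fun e => f_eq_idx hp h1 h2 (by omega) (by omega) e)
    omega
  · have E := pair_eq_elim hq
    rcases E.1 with e | e <;> exact fg_ne hp h1 h2 _ _ e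
  · have E := pair_eq_elim hq
    have H1 := f_eq_idx hp h1 h2 (by omega) (by omega) (E.1.resolve_right (fg_ne hp h1 h2 _ _))
    have H2 := f_eq_idx hp h1 h2 (by omega) (by omega) (E.2.1.resolve_right (fg_ne hp h1 h2 _ _))
    omega
  · have E := pair_eq_elim hq
    rcases E.1 with e | e <;> exact gf_ne hp h1 h2 _ _ e
  · have E := pair_eq_elim hq
    have H1 := E.1.imp (fun e => g_eq_idx hp h1 h2 (by omega) (by omega) e)
      (fun e => g_eq_idx hp h1 h2 (by omega) (by omega) e)
    have H2 := E.2.1.imp (fun e => g_eq_idx hp h1 h2 (by omega) (by omega) e)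
      (fun e => g_eq_idx hp h1 h2 (by omega) (by omega) e)
    omega
  · have E := pair_eq_elim hq
    have H1 := g_eq_idx hp h1 h2 (by omega) (by omega)
      (E.1.resolve_left fun e => gf_ne hp h1 h2 _ _ e)
    have H2 := g_eq_idx hp h1 h2 (by omega) (by omega)
      (E.2.1.resolve_left fun e => gf_ne hp h1 h2 _ _ e)
    omega
  · have E := pair_eq_elim hq
    rcases E.2.1 with e | e <;> exact gf_ne hp h1 h2 _ _ e
  · have E := pair_eq_elim hq
    rcases E.1 with e | e <;> exact fg_ne hp h1 h2 _ _ e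
  · have E := pair_eq_elim hq
    have H1 := f_eq_idx hp h1 h2 (by omega) (by omega) (E.1.resolve_right (fg_ne hp h1 h2 _ _))
    omega

lemma disj_F2_F3 : Disjoint (F2 n i) (F3 n i) := by
  rw [Set.disjoint_left]
  rintro p ((⟨j, hj, rfl⟩ | ⟨j, hj, rfl⟩) | rfl) ((hq | hq) | ⟨k, hk2, hkn, hq⟩)
  · have E := pair_eq_elim hq
    have H1 := E.1.imp (fun e => f_eq_idx hp h1 h2 (by omega) (by omega) e)
      (fun e => f_eq_idx hp h1 h2 (by omega) (by omega) e)
    omega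
  · have E := pair_eq_elim hq
    rcases E.1 with e | e <;> exact fg_ne hp h1 h2 _ _ e
  · have E := pair_eq_elim hq
    have H1 := f_eq_idx hp h1 h2 (by omega) (by omega) (E.1.resolve_right (fg_ne hp h1 h2 _ _))
    have H2 := f_eq_idx hp h1 h2 (by omega) (by omega) (E.2.1.resolve_right (fg_ne hp h1 h2 _ _))
    omega
  · have E := pair_eq_elim hq
    rcases E.1 with e | e <;> exact gf_ne hp h1 h2 _ _ e
  · have E := pair_eq_elim hq
    have H1 := E.1.imp (fun e => g_eq_idx hp h1 h2 (by omega) (by omega) e)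
      (fun e => g_eq_idx hp h1 h2 (by omega) (by omega) e)
    omega
  · have E := pair_eq_elim hq
    have H1 := g_eq_idx hp h1 h2 (by omega) (by omega)
      (E.1.resolve_left fun e => gf_ne hp h1 h2 _ _ e)
    have H2 := g_eq_idx hp h1 h2 (by omega) (by omega)
      (E.2.1.resolve_left fun e => gf_ne hp h1 h2 _ _ e)
    omega
  · have E := pair_eq_elim hq
    rcases E.2.1 with e | e <;> exact gf_ne hp h1 h2 _ _ e
  · have E := pair_eq_elim hq
    rcases E.1 with e | e <;> exact fg_ne hp h1 h2 _ _ e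
  · have E := pair_eq_elim hq
    have H1 := f_eq_idx hp h1 h2 (by omega) (by omega) (E.1.resolve_right (fg_ne hp h1 h2 _ _))
    omega

lemma union_eq : F1 n i ∪ F2 n i ∪ F3 n i = AA n i ∪ BB n i ∪ CC n (i - 1) := by
  rw [AA_eq hp h1 h2, BB_eq hp h1 h2, CC_eq hp h1 h2]
  ext p
  simp only [F1, F2, F3, Set.mem_union, Set.mem_setOf_eq, Set.mem_singleton_iff]
  constructor
  · rintro ((((⟨j, hj, rfl⟩ | ⟨j, hj, rfl⟩) | rfl) | ((⟨j, hj, rfl⟩ | ⟨j, hj, rfl⟩) | rfl)) |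
      ((rfl | rfl) | ⟨k, hk2, hkn, rfl⟩))
    · refine Or.inl (Or.inl ⟨2 * j + 1, by omega, ?_⟩)
      rw [show 2 * j + 1 + 1 = 2 * j + 2 by omega]
    · refine Or.inl (Or.inr ⟨2 * j + 1, by omega, ?_⟩)
      rw [show 2 * j + 1 + 1 = 2 * j + 2 by omega]
    · exact Or.inr ⟨0, by omega, rfl⟩
    · refine Or.inl (Or.inl ⟨2 * j + 2, by omega, ?_⟩)
      rw [show 2 * j + 2 + 1 = 2 * j + 3 by omega]
    · refine Or.inl (Or.inr ⟨2 * j + 2, by omega, ?_⟩)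
      rw [show 2 * j + 2 + 1 = 2 * j + 3 by omega]
    · exact Or.inr ⟨1, by omega, rfl⟩
    · exact Or.inl (Or.inl ⟨0, by omega, rfl⟩)
    · exact Or.inl (Or.inr ⟨0, by omega, rfl⟩)
    · exact Or.inr ⟨k, by omega, rfl⟩
  · rintro ((⟨k, hk, rfl⟩ | ⟨k, hk, rfl⟩) | ⟨k, hk, rfl⟩)
    · rcases Nat.eq_zero_or_pos k with rfl | hk0
      · exact Or.inr (Or.inl (Or.inl rfl))
      · rcases Nat.even_or_odd k with he | ho
        · rw [Nat.even_iff] at he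
          refine Or.inl (Or.inr (Or.inl (Or.inl ⟨(k - 2) / 2, by omega, ?_⟩)))
          rw [show 2 * ((k - 2) / 2) + 2 = k by omega, show 2 * ((k - 2) / 2) + 3 = k + 1 by omega]
        · rw [Nat.odd_iff] at ho
          refine Or.inl (Or.inl (Or.inl (Or.inl ⟨(k - 1) / 2, by omega, ?_⟩)))
          rw [show 2 * ((k - 1) / 2) + 1 = k by omega, show 2 * ((k - 1) / 2) + 2 = k + 1 by omega]
    · rcases Nat.eq_zero_or_pos k with rfl | hk0
      · exact Or.inr (Or.inl (Or.inr rfl))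
      · rcases Nat.even_or_odd k with he | ho
        · rw [Nat.even_iff] at he
          refine Or.inl (Or.inr (Or.inl (Or.inr ⟨(k - 2) / 2, by omega, ?_⟩)))
          rw [show 2 * ((k - 2) / 2) + 2 = k by omega, show 2 * ((k - 2) / 2) + 3 = k + 1 by omega]
        · rw [Nat.odd_iff] at ho
          refine Or.inl (Or.inl (Or.inl (Or.inr ⟨(k - 1) / 2, by omega, ?_⟩)))
          rw [show 2 * ((k - 1) / 2) + 1 = k by omega, show 2 * ((k - 1) / 2) + 2 = k + 1 by omega]
    · rcases Nat.eq_zero_or_pos k with rfl | hk0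
      · exact Or.inl (Or.inl (Or.inr rfl))
      · rcases eq_or_ne k 1 with rfl | hk1
        · exact Or.inl (Or.inr (Or.inr rfl))
        · exact Or.inr (Or.inr ⟨k, by omega, hk, rfl⟩)

end main
end ABCaux

/-- For prime `n ≥ 7` with `n ≡ 1, 5 (mod 6)` and `1 ≤ i ≤ (n-1)/2`, the edge set
`A_i ∪ B_i ∪ C_{i-1}` can be partitioned into three perfect matchings of `K_{2n}`. -/
theorem ABC_three_factors (n i : ℕ) (hp : n.Prime) (h7 : 7 ≤ n)
    (hmod : n % 6 = 1 ∨ n % 6 = 5) (hi1 : 1 ≤ i) (hi2 : i ≤ (n - 1) / 2) :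
    ∃ F1 F2 F3 : Set (Finset ℕ),
      IsOneFactor n F1 ∧ IsOneFactor n F2 ∧ IsOneFactor n F3 ∧
      Disjoint F1 F2 ∧ Disjoint F1 F3 ∧ Disjoint F2 F3 ∧
      F1 ∪ F2 ∪ F3 = AA n i ∪ BB n i ∪ CC n (i - 1) := by
  have h2 : 2 * i < n := by omega
  have hodd : n % 2 = 1 := Nat.odd_iff.mp (hp.odd_of_ne_two (by omega))
  refine ⟨ABCaux.F1 n i, ABCaux.F2 n i, ABCaux.F3 n i,
    ⟨ABCaux.card_bound_F1 hp hi1 h2 h7 hodd, ABCaux.pairwise_F1 hp hi1 h2 h7 hodd,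
      ABCaux.cover_F1 hp hi1 h2 h7 hodd⟩,
    ⟨ABCaux.card_bound_F2 hp hi1 h2 h7 hodd, ABCaux.pairwise_F2 hp hi1 h2 h7 hodd,
      ABCaux.cover_F2 hp hi1 h2 h7 hodd⟩,
    ⟨ABCaux.card_bound_F3 hp hi1 h2 h7 hodd, ABCaux.pairwise_F3 hp hi1 h2 h7 hodd,
      ABCaux.cover_F3 hp hi1 h2 h7 hodd⟩,
    ABCaux.disj_F1_F2 hp hi1 h2 h7 hodd, ABCaux.disj_F1_F3 hp hi1 h2 h7 hodd,
    ABCaux.disj_F2_F3 hp hi1 h2 h7 hodd, ABCaux.union_eq hp hi1 h2 h7 hodd⟩
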